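/- miP-tV logical consequence is not closed under substitution of atoms by formulas: p → q ∨ r ⊨ (p → q) ∨ (p → r) holds for atoms, but the substitution instance p ∨ q → p ∨ q ⊨ (p ∨ q → p) ∨ (p ∨ q → q) fails (there is no logically valid argument for it). -/

import Mathlib

/-- Propositional atoms: `⊥` and countably many atoms `p n`. -/
inductive PAtom : Type
  | bot
  | p (n : ℕ)
deriving DecidableEq

/-- Formulas of the propositional language. -/
inductive Formula : Type
  | atom (a : PAtom)
  | and (A B : Formula)
  | or (A B : Formula)
  | imp (A B : Formula)
deriving DecidableEq

/-- Atomic rules (level ≤ 1): a list of atomic premises and an atomic conclusion.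
An axiom (level-0 rule) is `⟨[], a⟩`. -/
structure ARule where
  prems : List PAtom
  concl : PAtom
deriving DecidableEq

/-- The atomic explosion rules: from `⊥` infer any atom. -/
def AE : Set ARule := { r | ∃ a, r = ⟨[PAtom.bot], a⟩ }

/-- An atomic base is a set of atomic rules containing atomic explosion. -/
def IsBase (B : Set ARule) : Prop := AE ⊆ B

/-- Argument structures: natural-deduction-style trees with arbitrary inference
steps. `hyp A` is an assumption; `node c prems` is an inference to conclusion `c`
from the listed premise subtrees, where each premise comes with a list of
assumption-formulas it discharges in that subtree. An axiom is `node c []`. -/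
inductive Arg : Type
  | hyp (A : Formula)
  | node (concl : Formula) (prems : List (List Formula × Arg))

/-- Conclusion of an argument structure. -/
def Arg.concl : Arg → Formula
  | .hyp A => A
  | .node c _ => c

mutual
/-- The (open, i.e. undischarged) assumption-formulas of an argument structure. -/
def Arg.assumptions : Arg → Finset Formula
  | .hyp A => {A}
  | .node _ prems => assumptionsList prems

def assumptionsList : List (List Formula × Arg) → Finset Formula
  | [] => ∅
  | pr :: rest => (Arg.assumptions pr.2 \ pr.1.toFinset) ∪ assumptionsList rest
end

mutual
/-- Substitution of argument structures for the open assumptions of an argument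
structure; `bound` records the assumption-formulas discharged above. -/
def Arg.subst (σ : Formula → Arg) (bound : Finset Formula) : Arg → Arg
  | .hyp A => if A ∈ bound then .hyp A else σ A
  | .node c prems => .node c (substList σ bound prems)

def substList (σ : Formula → Arg) (bound : Finset Formula) :
    List (List Formula × Arg) → List (List Formula × Arg)
  | [] => []
  | pr :: rest => (pr.1, Arg.subst σ (bound ∪ pr.1.toFinset) pr.2) :: substList σ bound rest
end

/-- `AtomDeriv B D` : the argument structure `D` is an atomic derivation of the
base `B` (every node is an application of a rule of `B`). -/
inductive AtomDeriv (B : Set ARule) : Arg → Prop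
  | app (r : ARule) (hr : r ∈ B) (subs : List Arg)
      (hc : subs.map Arg.concl = r.prems.map Formula.atom)
      (hs : ∀ D ∈ subs, AtomDeriv B D) :
      AtomDeriv B (.node (.atom r.concl) (subs.map (fun D => ([], D))))

/-- A reduction is a partial function on argument structures. -/
abbrev Red := Arg → Option Arg

/-- One-step reduction relative to a set of reductions `J`: apply some `φ ∈ J` to
some substructure. -/
inductive Step (J : Set Red) : Arg → Arg → Prop
  | red {φ : Red} {D D' : Arg} : φ ∈ J → φ D = some D' → Step J D D'
  | congr {c : Formula} {pre post : List (List Formula × Arg)} {ds : List Formula}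
      {D D' : Arg} : Step J D D' →
      Step J (.node c (pre ++ (ds, D) :: post)) (.node c (pre ++ (ds, D') :: post))

/-- `D` reduces to `D'` relative to `J` (reflexive-transitive closure). -/
def Reduces (J : Set Red) : Arg → Arg → Prop := Relation.ReflTransGen (Step J)

/-- Validity of closed arguments `⟨D, J⟩` on a base `B`, by recursion on the
conclusion: a closed argument with atomic conclusion must reduce to an atomic
derivation of the base; one with compound conclusion must reduce to a canonical
(introduction-ended) closed structure whose immediate substructures are valid
(for `→`, valid as an open argument: under every extension of the reduction set
and of the base, substitution of valid closed arguments for the discharged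
assumption yields a valid closed argument). -/
def CValid : Formula → Set ARule → Set Red → Arg → Prop
  | .atom a, B, J, D => ∃ D', Reduces J D D' ∧ AtomDeriv B D' ∧ D'.concl = .atom a
  | .and A C, B, J, D => ∃ D1 D2 : Arg,
      Reduces J D (.node (A.and C) [([], D1), ([], D2)]) ∧
      D1.assumptions = ∅ ∧ D2.assumptions = ∅ ∧ D1.concl = A ∧ D2.concl = C ∧
      CValid A B J D1 ∧ CValid C B J D2
  | .or A C, B, J, D =>
      (∃ D1 : Arg, Reduces J D (.node (A.or C) [([], D1)]) ∧
        D1.assumptions = ∅ ∧ D1.concl = A ∧ CValid A B J D1) ∨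
      (∃ D1 : Arg, Reduces J D (.node (A.or C) [([], D1)]) ∧
        D1.assumptions = ∅ ∧ D1.concl = C ∧ CValid C B J D1)
  | .imp A C, B, J, D => ∃ D1 : Arg,
      Reduces J D (.node (A.imp C) [([A], D1)]) ∧
      D1.assumptions ⊆ {A} ∧ D1.concl = C ∧
      ∀ H : Set Red, J ⊆ H → ∀ X : Set ARule, B ⊆ X → ∀ E : Arg,
        E.assumptions = ∅ → E.concl = A → CValid A X H E →
        CValid C X H (Arg.subst (fun _ => E) ∅ D1)

/-- Validity of an argument `⟨D, J⟩` on a base `B` (Prawitz, monotonic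
introduction-based form): closed arguments as in `CValid`; an open argument is
valid iff for every extension `H ⊇ J` of the reduction set, every extension
`X ⊇ B` of the base, and every assignment of closed arguments valid on `X`
(w.r.t. `H`) to its open assumptions, the resulting closed instance is valid
on `X` w.r.t. `H`. -/
def Valid (B : Set ARule) (D : Arg) (J : Set Red) : Prop :=
  if D.assumptions = ∅ then CValid D.concl B J D
  else ∀ (σ : Formula → Arg) (H : Set Red) (X : Set ARule), J ⊆ H → B ⊆ X →
    (∀ A ∈ D.assumptions, (σ A).assumptions = ∅ ∧ (σ A).concl = A ∧ CValid A X H (σ A)) →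
    CValid D.concl X H (Arg.subst σ ∅ D)

/-- Logical validity: validity on every atomic base. -/
def LValid (D : Arg) (J : Set Red) : Prop :=
  ∀ B : Set ARule, IsBase B → Valid B D J

/-- miP-tV consequence over a base: `Γ ⊨_B A` iff there is an argument `⟨D, J⟩`
valid on `B` with `D` an argument structure from `Γ` to `A`. -/
def EntailsOn (B : Set ARule) (Γ : Finset Formula) (A : Formula) : Prop :=
  ∃ (D : Arg) (J : Set Red), D.assumptions = Γ ∧ D.concl = A ∧ Valid B D J

/-- miP-tV logical consequence: `Γ ⊨ A` iff there is a logically valid argument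
`⟨D, J⟩` with `D` from `Γ` to `A`. -/
def Entails (Γ : Finset Formula) (A : Formula) : Prop :=
  ∃ (D : Arg) (J : Set Red), D.assumptions = Γ ∧ D.concl = A ∧ LValid D J

/-! ### Auxiliary lemmas -/

/-- Any structure reduces to any structure under the full reduction set. -/
lemma reduces_univ (D D' : Arg) : Reduces Set.univ D D' :=
  Relation.ReflTransGen.single (Step.red (φ := fun _ => some D') (Set.mem_univ _) rfl)

lemma node_nil_assumptions (A : Formula) : (Arg.node A []).assumptions = ∅ := by
  simp [Arg.assumptions, assumptionsList]

/-- Atomic derivability is monotone in the base. -/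
lemma atomDeriv_mono {B X : Set ARule} (hBX : B ⊆ X) :
    ∀ {D : Arg}, AtomDeriv B D → AtomDeriv X D := by
  intro D hD
  induction hD with
  | app r hr subs hc hs ih => exact AtomDeriv.app r (hBX hr) subs hc ih

/-- Choice over lists of derivable-matching arguments. -/
lemma exists_list {P : Arg → Prop} : ∀ (l : List Arg),
    (∀ D ∈ l, ∃ D', P D' ∧ D'.concl = D.concl) →
    ∃ l' : List Arg, (∀ D ∈ l', P D) ∧ l'.map Arg.concl = l.map Arg.concl := by
  intro l
  induction l with
  | nil => exact fun _ => ⟨[], by simp, rfl⟩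
  | cons d t ih =>
    intro h
    obtain ⟨t', ht, hm⟩ := ih (fun D hD => h D (List.mem_cons_of_mem _ hD))
    obtain ⟨d', hd, hdc⟩ := h d List.mem_cons_self
    refine ⟨d' :: t', ?_, by simp [hdc, hm]⟩
    intro D hD
    rcases List.mem_cons.mp hD with rfl | hD
    · exact hd
    · exact ht _ hD

/-- Cut for atomic derivations: a derivation over `X ∪ {axiom a}` plus a
derivation of `a` over `X' ⊇ X` yields a derivation over `X'`. -/
lemma atom_cut {X X' : Set ARule} {a : PAtom} (hXX : X ⊆ X')
    (Da : Arg) (hDa : AtomDeriv X' Da) (hca : Da.concl = .atom a) :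
    ∀ D, AtomDeriv (X ∪ {ARule.mk [] a}) D →
      ∃ D', AtomDeriv X' D' ∧ D'.concl = D.concl := by
  intro D hD
  induction hD with
  | app r hr subs hc hs ih =>
    rcases hr with hr | hr
    · obtain ⟨subs', hsub, hm⟩ := exists_list subs ih
      exact ⟨.node (.atom r.concl) (subs'.map fun D => ([], D)),
        AtomDeriv.app r (hXX hr) subs' (hm.trans hc) hsub, rfl⟩
    · simp only [Set.mem_singleton_iff] at hr
      subst hr
      exact ⟨Da, hDa, by rw [hca]; rfl⟩

/-- The Kripke-style forcing relation that `CValid` collapses to at the full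
reduction set. -/
def F (X : Set ARule) : Formula → Prop
  | .atom a => ∃ D, AtomDeriv X D ∧ D.concl = .atom a
  | .and A C => F X A ∧ F X C
  | .or A C => F X A ∨ F X C
  | .imp A C => ∀ X', X ⊆ X' → F X' A → F X' C

lemma F_mono : ∀ (A : Formula) {X Y : Set ARule}, X ⊆ Y → F X A → F Y A := by
  intro A
  induction A with
  | atom a => rintro X Y hXY ⟨D, hD, hc⟩; exact ⟨D, atomDeriv_mono hXY hD, hc⟩
  | and A C ihA ihC => rintro X Y hXY ⟨h1, h2⟩; exact ⟨ihA hXY h1, ihC hXY h2⟩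
  | or A C ihA ihC =>
    rintro X Y hXY (h | h)
    · exact Or.inl (ihA hXY h)
    · exact Or.inr (ihC hXY h)
  | imp A C ihA ihC =>
    intro X Y hXY h X' hYX' hA
    exact h X' (hXY.trans hYX') hA

/-- Collapse of `CValid` at the full reduction set. -/
lemma cvalid_univ : ∀ (A : Formula) (X : Set ARule) (D : Arg),
    CValid A X Set.univ D ↔ F X A := by
  intro A
  induction A with
  | atom a =>
    intro X D
    constructor
    · rintro ⟨D', _, hD', hc⟩; exact ⟨D', hD', hc⟩
    · rintro ⟨D', hD', hc⟩; exact ⟨D', reduces_univ _ _, hD', hc⟩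
  | and A C ihA ihC =>
    intro X D
    constructor
    · rintro ⟨D1, D2, _, _, _, _, _, h1, h2⟩
      exact ⟨(ihA X D1).mp h1, (ihC X D2).mp h2⟩
    · rintro ⟨h1, h2⟩
      exact ⟨.node A [], .node C [], reduces_univ _ _, node_nil_assumptions _,
        node_nil_assumptions _, rfl, rfl, (ihA X _).mpr h1, (ihC X _).mpr h2⟩
  | or A C ihA ihC =>
    intro X D
    constructor
    · rintro (⟨D1, _, _, _, h1⟩ | ⟨D1, _, _, _, h1⟩)
      · exact Or.inl ((ihA X D1).mp h1)
      · exact Or.inr ((ihC X D1).mp h1)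
    · rintro (h | h)
      · exact Or.inl ⟨.node A [], reduces_univ _ _, node_nil_assumptions _, rfl,
          (ihA X _).mpr h⟩
      · exact Or.inr ⟨.node C [], reduces_univ _ _, node_nil_assumptions _, rfl,
          (ihC X _).mpr h⟩
  | imp A C ihA ihC =>
    intro X D
    constructor
    · rintro ⟨D1, _, _, hc, hprop⟩
      intro X' hXX' hA
      have hE : CValid A X' Set.univ (.node A []) := (ihA X' _).mpr hA
      have := hprop Set.univ (subset_refl _) X' hXX' (.node A [])
        (node_nil_assumptions _) rfl hE
      exact (ihC X' _).mp this
    · intro h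
      refine ⟨.node C [], reduces_univ _ _, by simp [node_nil_assumptions], rfl, ?_⟩
      intro H hH X' hXX' E hE1 hE2 hEv
      have hHu : H = Set.univ := (Set.univ_subset_iff.mp hH)
      subst hHu
      exact (ihC X' _).mpr (h X' hXX' ((ihA X' E).mp hEv))

/-- The key semantic fact: forcing of `p → q ∨ r` implies forcing of
`(p → q) ∨ (p → r)` for atoms. -/
lemma F_disj (X : Set ARule) (p q r : PAtom)
    (h : F X ((Formula.atom p).imp ((Formula.atom q).or (Formula.atom r)))) :
    F X (((Formula.atom p).imp (Formula.atom q)).or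
      ((Formula.atom p).imp (Formula.atom r))) := by
  set Xp : Set ARule := X ∪ {ARule.mk [] p} with hXp
  have hp : F Xp (.atom p) :=
    ⟨.node (.atom p) [], AtomDeriv.app ⟨[], p⟩ (Or.inr rfl) [] (by simp) (by simp), rfl⟩
  have hor := h Xp Set.subset_union_left hp
  rcases hor with ⟨Dq, hDq, hcq⟩ | ⟨Dr, hDr, hcr⟩
  · refine Or.inl ?_
    rintro X' hXX' ⟨Dp, hDp, hcp⟩
    obtain ⟨D', hD', hc'⟩ := atom_cut hXX' Dp hDp hcp Dq hDq
    exact ⟨D', hD', by rw [hc', hcq]⟩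
  · refine Or.inr ?_
    rintro X' hXX' ⟨Dp, hDp, hcp⟩
    obtain ⟨D', hD', hc'⟩ := atom_cut hXX' Dp hDp hcp Dr hDr
    exact ⟨D', hD', by rw [hc', hcr]⟩

/-- Only `m` is derivable over `AE` extended by the axiom `p m`. -/
lemma deriv_concl {m : ℕ} :
    ∀ D, AtomDeriv (AE ∪ {ARule.mk [] (PAtom.p m)}) D →
      D.concl = .atom (PAtom.p m) := by
  intro D hD
  induction hD with
  | app r hr subs hc hs ih =>
    rcases hr with ⟨a, rfl⟩ | hr
    · exfalso
      cases subs with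
      | nil => simp at hc
      | cons d t =>
        have hd := ih d List.mem_cons_self
        simp [hd] at hc
    · simp only [Set.mem_singleton_iff] at hr
      subst hr
      rfl

/-- miP-tV logical consequence is not closed under substitution of
atoms by formulas: for distinct atoms `p, q, r`, `p → q ∨ r ⊨ (p → q) ∨ (p → r)`
holds, but the substitution instance
`p ∨ q → p ∨ q ⊨ (p ∨ q → p) ∨ (p ∨ q → q)` fails. -/
theorem entails_not_closed_under_substitution (np nq nr : ℕ)
    (hpq : np ≠ nq) (hpr : np ≠ nr) (hqr : nq ≠ nr) :
    Entails {(Formula.atom (PAtom.p np)).imp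
        ((Formula.atom (PAtom.p nq)).or (Formula.atom (PAtom.p nr)))}
      (((Formula.atom (PAtom.p np)).imp (Formula.atom (PAtom.p nq))).or
        ((Formula.atom (PAtom.p np)).imp (Formula.atom (PAtom.p nr)))) ∧
    ¬ Entails {((Formula.atom (PAtom.p np)).or (Formula.atom (PAtom.p nq))).imp
          ((Formula.atom (PAtom.p np)).or (Formula.atom (PAtom.p nq)))}
        ((((Formula.atom (PAtom.p np)).or (Formula.atom (PAtom.p nq))).imp
            (Formula.atom (PAtom.p np))).or
          ((((Formula.atom (PAtom.p np)).or (Formula.atom (PAtom.p nq))).imp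
            (Formula.atom (PAtom.p nq))))) := by
  constructor
  · -- positive part: take the one-step argument structure and the full reduction set
    refine ⟨Arg.node (((Formula.atom (PAtom.p np)).imp (Formula.atom (PAtom.p nq))).or
        ((Formula.atom (PAtom.p np)).imp (Formula.atom (PAtom.p nr))))
        [([], Arg.hyp ((Formula.atom (PAtom.p np)).imp
          ((Formula.atom (PAtom.p nq)).or (Formula.atom (PAtom.p nr)))))],
      Set.univ, ?_, rfl, ?_⟩
    · simp [Arg.assumptions, assumptionsList]
    · intro B hB
      simp only [Valid]
      rw [if_neg (by simp [Arg.assumptions, assumptionsList])]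
      intro σ H X hJH hBX hσ
      have hHu : H = Set.univ := Set.univ_subset_iff.mp hJH
      subst hHu
      obtain ⟨-, -, hCV⟩ := hσ ((Formula.atom (PAtom.p np)).imp
          ((Formula.atom (PAtom.p nq)).or (Formula.atom (PAtom.p nr))))
        (by simp [Arg.assumptions, assumptionsList])
      have hF := (cvalid_univ _ X _).mp hCV
      exact (cvalid_univ _ X _).mpr (F_disj X _ _ _ hF)
  · -- negative part
    rintro ⟨D, J, hass, hconc, hLV⟩
    have hV := hLV AE (subset_refl _)
    simp only [Valid] at hV
    rw [if_neg (by rw [hass]; simp)] at hV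
    -- the identity argument for P∨Q → P∨Q is valid everywhere
    have hIval : ∀ (X : Set ARule) (H : Set Red),
        CValid (((Formula.atom (PAtom.p np)).or (Formula.atom (PAtom.p nq))).imp
          ((Formula.atom (PAtom.p np)).or (Formula.atom (PAtom.p nq)))) X H
          (Arg.node (((Formula.atom (PAtom.p np)).or (Formula.atom (PAtom.p nq))).imp
            ((Formula.atom (PAtom.p np)).or (Formula.atom (PAtom.p nq))))
            [([(Formula.atom (PAtom.p np)).or (Formula.atom (PAtom.p nq))],
              Arg.hyp ((Formula.atom (PAtom.p np)).or (Formula.atom (PAtom.p nq))))]) := by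
      intro X H
      refine ⟨Arg.hyp ((Formula.atom (PAtom.p np)).or (Formula.atom (PAtom.p nq))),
        Relation.ReflTransGen.refl, by simp [Arg.assumptions], rfl, ?_⟩
      intro H' hH' X' hX' E hE1 hE2 hEv
      have hsub : Arg.subst (fun _ => E) ∅
          (Arg.hyp ((Formula.atom (PAtom.p np)).or (Formula.atom (PAtom.p nq)))) = E := by
        simp [Arg.subst]
      rw [hsub]
      exact hEv
    have hC := hV (fun _ => Arg.node
        (((Formula.atom (PAtom.p np)).or (Formula.atom (PAtom.p nq))).imp
          ((Formula.atom (PAtom.p np)).or (Formula.atom (PAtom.p nq))))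
        [([(Formula.atom (PAtom.p np)).or (Formula.atom (PAtom.p nq))],
          Arg.hyp ((Formula.atom (PAtom.p np)).or (Formula.atom (PAtom.p nq))))])
      J AE (subset_refl _) (subset_refl _) ?_
    swap
    · intro A hA
      rw [hass] at hA
      simp only [Finset.mem_singleton] at hA
      subst hA
      exact ⟨by simp [Arg.assumptions, assumptionsList], rfl, hIval AE J⟩
    rw [hconc] at hC
    rcases hC with ⟨D1, -, -, -, hv1⟩ | ⟨D1, -, -, -, hv1⟩
    · -- left disjunct: P∨Q → P valid on AE; refute at AE + axiom q
      obtain ⟨D2, -, -, -, hprop⟩ := hv1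
      have hEq : AtomDeriv (AE ∪ {ARule.mk [] (PAtom.p nq)})
          (Arg.node (.atom (PAtom.p nq)) []) :=
        AtomDeriv.app ⟨[], PAtom.p nq⟩ (Or.inr rfl) [] (by simp) (by simp)
      have hEv : CValid ((Formula.atom (PAtom.p np)).or (Formula.atom (PAtom.p nq)))
          (AE ∪ {ARule.mk [] (PAtom.p nq)}) J
          (Arg.node ((Formula.atom (PAtom.p np)).or (Formula.atom (PAtom.p nq)))
            [([], Arg.node (.atom (PAtom.p nq)) [])]) :=
        Or.inr ⟨Arg.node (.atom (PAtom.p nq)) [], Relation.ReflTransGen.refl,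
          node_nil_assumptions _, rfl,
          ⟨Arg.node (.atom (PAtom.p nq)) [], Relation.ReflTransGen.refl, hEq, rfl⟩⟩
      have hfinal := hprop J (subset_refl _) (AE ∪ {ARule.mk [] (PAtom.p nq)})
        Set.subset_union_left
        (Arg.node ((Formula.atom (PAtom.p np)).or (Formula.atom (PAtom.p nq)))
          [([], Arg.node (.atom (PAtom.p nq)) [])])
        (by simp [Arg.assumptions, assumptionsList, node_nil_assumptions]) rfl hEv
      obtain ⟨D', -, hAD, hc⟩ := hfinal
      have h1 := deriv_concl D' hAD
      rw [h1] at hc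
      injection hc with h2
      injection h2 with h3
      exact hpq h3.symm
    · -- right disjunct: P∨Q → Q valid on AE; refute at AE + axiom p
      obtain ⟨D2, -, -, -, hprop⟩ := hv1
      have hEq : AtomDeriv (AE ∪ {ARule.mk [] (PAtom.p np)})
          (Arg.node (.atom (PAtom.p np)) []) :=
        AtomDeriv.app ⟨[], PAtom.p np⟩ (Or.inr rfl) [] (by simp) (by simp)
      have hEv : CValid ((Formula.atom (PAtom.p np)).or (Formula.atom (PAtom.p nq)))
          (AE ∪ {ARule.mk [] (PAtom.p np)}) J
          (Arg.node ((Formula.atom (PAtom.p np)).or (Formula.atom (PAtom.p nq)))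
            [([], Arg.node (.atom (PAtom.p np)) [])]) :=
        Or.inl ⟨Arg.node (.atom (PAtom.p np)) [], Relation.ReflTransGen.refl,
          node_nil_assumptions _, rfl,
          ⟨Arg.node (.atom (PAtom.p np)) [], Relation.ReflTransGen.refl, hEq, rfl⟩⟩
      have hfinal := hprop J (subset_refl _) (AE ∪ {ARule.mk [] (PAtom.p np)})
        Set.subset_union_left
        (Arg.node ((Formula.atom (PAtom.p np)).or (Formula.atom (PAtom.p nq)))
          [([], Arg.node (.atom (PAtom.p np)) [])])
        (by simp [Arg.assumptions, assumptionsList, node_nil_assumptions]) rfl hEv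
      obtain ⟨D', -, hAD, hc⟩ := hfinal
      have h1 := deriv_concl D' hAD
      rw [h1] at hc
      injection hc with h2
      injection h2 with h3
      exact hpq h3
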